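/- Let l > 0, τ > s, and ξ, x be real. Then (1/(2l))·∑_{n∈ℤ} exp(−π²n²(τ−s)/l²)·cos(πn(x−ξ)/l) = (1/(2√(π(τ−s))))·∑_{n∈ℤ} exp(−(x−ξ+2nl)²/(4(τ−s))). -/

import Mathlib

open Real

set_option maxHeartbeats 1000000 in
theorem stmt_6 (l τ s x ξ : ℝ) (hl : 0 < l) (hτs : s < τ) :
    (1 / (2 * l)) * ∑' n : ℤ,
        Real.exp (-π ^ 2 * n ^ 2 * (τ - s) / l ^ 2) * Real.cos (π * n * (x - ξ) / l)
      = (1 / (2 * Real.sqrt (π * (τ - s)))) * ∑' n : ℤ,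
          Real.exp (-(x - ξ + 2 * n * l) ^ 2 / (4 * (τ - s))) := by
  have ht : (0:ℝ) < τ - s := by linarith
  set t : ℝ := τ - s with ht_def
  set y : ℝ := x - ξ with hy_def
  have hl0 : (l:ℝ) ≠ 0 := hl.ne'
  have hlC : (l:ℂ) ≠ 0 := by exact_mod_cast hl0
  have htC : ((τ - s : ℝ):ℂ) ≠ 0 := by exact_mod_cast ht.ne'
  have hπC : ((π : ℝ):ℂ) ≠ 0 := by exact_mod_cast Real.pi_ne_zero
  set a : ℝ := π * t / l ^ 2 with ha_def
  have ha : 0 < a := by positivity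
  set c : ℝ := y / (2 * l) with hc_def
  have key := Complex.tsum_exp_neg_quadratic (a := (a:ℂ))
    (by simpa using ha) (Complex.I * (c:ℂ))
  set f : ℤ → ℂ := fun n => Complex.exp (-(π:ℂ) * (a:ℂ) * (n:ℂ) ^ 2
      + 2 * (π:ℂ) * (Complex.I * (c:ℂ)) * (n:ℂ)) with hf_def
  have hf : Summable f := by
    have := (summable_jacobiTheta₂_term_iff (c:ℂ) ((a:ℂ) * Complex.I)).mpr
      (by simpa using ha)
    refine this.congr fun n => ?_
    simp only [jacobiTheta₂_term, hf_def]
    congr 1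
    ring_nf
    rw [Complex.I_sq]
    ring
  -- each term's exponent in real/imaginary form
  have hterm : ∀ n : ℤ, f n + f (-n)
      = (2 * (Real.exp (-π ^ 2 * n ^ 2 * t / l ^ 2) * Real.cos (π * n * y / l)) : ℝ) := by
    intro n
    have h1 : (-(π:ℂ) * (a:ℂ) * (n:ℂ) ^ 2 + 2 * (π:ℂ) * (Complex.I * (c:ℂ)) * (n:ℂ))
        = ((-π ^ 2 * n ^ 2 * t / l ^ 2 : ℝ) : ℂ) + ((π * n * y / l : ℝ) : ℂ) * Complex.I := by
      rw [ha_def, hc_def]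
      push_cast
      field_simp
    have h2 : (-(π:ℂ) * (a:ℂ) * ((-n : ℤ):ℂ) ^ 2 + 2 * (π:ℂ) * (Complex.I * (c:ℂ)) * ((-n : ℤ):ℂ))
        = ((-π ^ 2 * n ^ 2 * t / l ^ 2 : ℝ) : ℂ) + ((-(π * n * y / l) : ℝ) : ℂ) * Complex.I := by
      rw [ha_def, hc_def]
      push_cast
      field_simp
    simp only [hf_def]
    rw [h1, h2, Complex.exp_add, Complex.exp_add, Complex.exp_mul_I, Complex.exp_mul_I]
    simp only [← Complex.ofReal_exp, ← Complex.ofReal_cos, ← Complex.ofReal_sin,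
      Real.cos_neg, Real.sin_neg]
    push_cast
    ring
  -- the left complex sum is the real cosine sum
  have hfneg : Summable (fun n : ℤ => f (-n)) := (Equiv.neg ℤ).summable_iff.mpr hf
  have hLHS : ∑' n : ℤ, f n
      = ((∑' n : ℤ, Real.exp (-π ^ 2 * n ^ 2 * t / l ^ 2) * Real.cos (π * n * y / l) : ℝ) : ℂ) := by
    have hsym : ∑' n : ℤ, f (-n) = ∑' n : ℤ, f n := (Equiv.neg ℤ).tsum_eq f
    have h2 : (2:ℂ) * ∑' n : ℤ, f n = ∑' n : ℤ, (f n + f (-n)) := by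
      rw [Summable.tsum_add hf hfneg, hsym]; ring
    have h3 : ∑' n : ℤ, (f n + f (-n))
        = (2:ℂ) * ((∑' n : ℤ, Real.exp (-π ^ 2 * n ^ 2 * t / l ^ 2)
            * Real.cos (π * n * y / l) : ℝ) : ℂ) := by
      calc ∑' n : ℤ, (f n + f (-n))
          = ∑' n : ℤ, ((2 * (Real.exp (-π ^ 2 * n ^ 2 * t / l ^ 2)
              * Real.cos (π * n * y / l)) : ℝ) : ℂ) := by
            exact tsum_congr hterm
        _ = ((∑' n : ℤ, 2 * (Real.exp (-π ^ 2 * n ^ 2 * t / l ^ 2)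
              * Real.cos (π * n * y / l)) : ℝ) : ℂ) := by
            rw [Complex.ofReal_tsum]
        _ = _ := by
            push_cast
            rw [tsum_mul_left]
    have := h2.trans h3
    exact mul_left_cancel₀ (two_ne_zero) this
  -- the right complex sum is the real gaussian sum
  have hRterm : ∀ n : ℤ, Complex.exp (-(π:ℂ) / (a:ℂ) * ((n:ℂ) + Complex.I * (Complex.I * (c:ℂ))) ^ 2)
      = ((Real.exp (-(y + 2 * (-n) * l) ^ 2 / (4 * t)) : ℝ) : ℂ) := by
    intro n
    rw [Complex.ofReal_exp]
    congr 1
    have hI : Complex.I * (Complex.I * (c:ℂ)) = -(c:ℂ) := by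
      rw [← mul_assoc, Complex.I_mul_I]; ring
    rw [hI, ha_def, hc_def]
    push_cast
    field_simp
    ring
  have hRHS : ∑' n : ℤ, Complex.exp (-(π:ℂ) / (a:ℂ) * ((n:ℂ) + Complex.I * (Complex.I * (c:ℂ))) ^ 2)
      = ((∑' n : ℤ, Real.exp (-(y + 2 * n * l) ^ 2 / (4 * t)) : ℝ) : ℂ) := by
    rw [tsum_congr hRterm, ← Complex.ofReal_tsum]
    congr 1
    have h := (Equiv.neg ℤ).tsum_eq (fun n : ℤ => Real.exp (-(y + 2 * n * l) ^ 2 / (4 * t)))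
    refine Eq.trans ?_ h
    exact tsum_congr fun n => by simp only [Equiv.neg_apply]; push_cast; ring_nf
  -- the power
  have hpow : ((a:ℂ)) ^ ((1:ℂ)/2) = ((Real.sqrt a : ℝ) : ℂ) := by
    rw [show ((1:ℂ)/2) = ((1/2 : ℝ):ℂ) by norm_num, ← Complex.ofReal_cpow ha.le,
      ← Real.sqrt_eq_rpow]
  rw [hf_def] at key
  rw [hLHS, hRHS, hpow] at key
  have hsqrt : Real.sqrt a = Real.sqrt (π * t) / l := by
    rw [ha_def, Real.sqrt_div (by positivity), Real.sqrt_sq hl.le]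
  have key' : (∑' n : ℤ, Real.exp (-π ^ 2 * n ^ 2 * t / l ^ 2) * Real.cos (π * n * y / l))
      = 1 / Real.sqrt a * ∑' n : ℤ, Real.exp (-(y + 2 * n * l) ^ 2 / (4 * t)) := by
    exact_mod_cast key
  rw [key', hsqrt]
  have hs : 0 < Real.sqrt (π * t) := Real.sqrt_pos.mpr (by positivity)
  field_simp
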